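/- Let d_s, m, n ∈ ℕ with n ≥ 1. Let L_B : (Fin n → EuclideanSpace ℝ (Fin d_s)) × EuclideanSpace ℝ (Fin m) → ℝ be differentiable and invariant under permutations of the n blocks, i.e. L_B(θ ∘ σ, η) = L_B(θ, η) for every permutation σ of Fin n. Define L_S : EuclideanSpace ℝ (Fin d_s) → ℝ by L_S(θ) = L_B(fun _ => θ, 0). Then for every θ and every i : Fin n, the partial gradient of L_B with respect to the i-th block, evaluated at the diagonal point (fun _ => θ, 0), equals (1/n) · gradient L_S θ. -/

import Mathlib

/-- **Scaled gradient lemma.** If the big-model loss `L_B` on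
`(Fin n → ℝ^{d_s}) × ℝ^m` is differentiable and invariant under permutations of the
`n` parameter blocks, and `L_S(θ) = L_B(θ,…,θ,0)`, then the partial gradient of `L_B`
with respect to the `i`-th block at the diagonal point `(θ,…,θ,0)` equals
`(1/n)·∇L_S(θ)`. -/
theorem stmt_5 (d_s m n : ℕ) (hn : 1 ≤ n)
    (L_B : (Fin n → EuclideanSpace ℝ (Fin d_s)) × EuclideanSpace ℝ (Fin m) → ℝ)
    (hdiff : Differentiable ℝ L_B)
    (hsym : ∀ (θ : Fin n → EuclideanSpace ℝ (Fin d_s)) (η : EuclideanSpace ℝ (Fin m))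
      (σ : Equiv.Perm (Fin n)), L_B (θ ∘ σ, η) = L_B (θ, η))
    (L_S : EuclideanSpace ℝ (Fin d_s) → ℝ)
    (hLS : L_S = fun θ => L_B (fun _ => θ, 0))
    (θ : EuclideanSpace ℝ (Fin d_s)) (i : Fin n) :
    gradient (fun θi => L_B (Function.update (fun _ => θ) i θi, 0)) θ
      = (1 / (n : ℝ)) • gradient L_S θ := by
  classical
  have hne : (n : ℝ) ≠ 0 := Nat.cast_ne_zero.mpr (by omega)
  set L' : ((Fin n → EuclideanSpace ℝ (Fin d_s)) × EuclideanSpace ℝ (Fin m)) →L[ℝ] ℝ :=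
    fderiv ℝ L_B ((fun _ => θ), 0) with hL'
  set S : Fin n → (EuclideanSpace ℝ (Fin d_s) →L[ℝ]
      ((Fin n → EuclideanSpace ℝ (Fin d_s)) × EuclideanSpace ℝ (Fin m))) := fun j =>
    (ContinuousLinearMap.pi (Pi.single j
      (ContinuousLinearMap.id ℝ (EuclideanSpace ℝ (Fin d_s))))).prod 0 with hS
  have hSapp : ∀ (j : Fin n) (v : EuclideanSpace ℝ (Fin d_s)),
      S j v = (Pi.single j v, 0) := by
    intro j v
    refine Prod.ext ?_ rfl
    funext k
    simp [hS, ContinuousLinearMap.pi_apply, Pi.single_apply]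
    split <;> simp
  -- derivative of the partial maps
  have hgi : ∀ j : Fin n, HasFDerivAt
      (fun θi => L_B (Function.update (fun _ => θ) j θi, 0)) (L'.comp (S j)) θ := by
    intro j
    have h1 : HasFDerivAt
        (fun θi : EuclideanSpace ℝ (Fin d_s) =>
          (Function.update (fun _ => θ) j θi, (0 : EuclideanSpace ℝ (Fin m)))) (S j) θ :=
      HasFDerivAt.prodMk (hasFDerivAt_update (fun _ => θ) θ) (hasFDerivAt_const _ _)
    have hb : HasFDerivAt L_B L' (Function.update (fun _ => θ) j θ, 0) := by
      rw [Function.update_eq_self]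
      exact (hdiff _).hasFDerivAt
    exact hb.comp θ h1
  -- derivative of L_S
  set Dclm : EuclideanSpace ℝ (Fin d_s) →L[ℝ]
      ((Fin n → EuclideanSpace ℝ (Fin d_s)) × EuclideanSpace ℝ (Fin m)) :=
    (ContinuousLinearMap.pi fun _ => ContinuousLinearMap.id ℝ (EuclideanSpace ℝ (Fin d_s))).prod 0
    with hD
  have hDapp : ∀ v, Dclm v = ((fun _ => v), 0) := fun v => rfl
  have hLSd : HasFDerivAt L_S (L'.comp Dclm) θ := by
    rw [hLS]
    exact (hdiff _).hasFDerivAt.comp θ Dclm.hasFDerivAt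
  -- symmetry of the derivative
  have hsymderiv : ∀ (j : Fin n) (v : EuclideanSpace ℝ (Fin d_s)),
      L' (Pi.single j v, 0) = L' (Pi.single i v, 0) := by
    intro j v
    set σ : Equiv.Perm (Fin n) := Equiv.swap i j with hσ
    set P : ((Fin n → EuclideanSpace ℝ (Fin d_s)) × EuclideanSpace ℝ (Fin m)) →L[ℝ]
        ((Fin n → EuclideanSpace ℝ (Fin d_s)) × EuclideanSpace ℝ (Fin m)) :=
      (ContinuousLinearMap.pi fun k =>
        (ContinuousLinearMap.proj (σ k)).comp
          (ContinuousLinearMap.fst ℝ (Fin n → EuclideanSpace ℝ (Fin d_s))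
            (EuclideanSpace ℝ (Fin m)))).prod
        (ContinuousLinearMap.snd ℝ (Fin n → EuclideanSpace ℝ (Fin d_s))
          (EuclideanSpace ℝ (Fin m))) with hPdef
    have hPapp : ∀ q : ((Fin n → EuclideanSpace ℝ (Fin d_s)) × EuclideanSpace ℝ (Fin m)),
        P q = (q.1 ∘ σ, q.2) := fun q => rfl
    have hcomp : L_B ∘ P = L_B := by
      funext q
      simp only [Function.comp_apply, hPapp]
      exact hsym q.1 q.2 σ
    have hPp : P ((fun _ => θ), 0) = ((fun _ => θ), 0) := by
      rw [hPapp]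
      exact Prod.ext rfl rfl
    have hLP : L' = L'.comp P := by
      have h1 : fderiv ℝ (L_B ∘ P) ((fun _ => θ), 0)
          = (fderiv ℝ L_B (P ((fun _ => θ), 0))).comp P :=
        ((hdiff _).hasFDerivAt.comp _ P.hasFDerivAt).fderiv
      rw [hcomp, hPp] at h1
      rw [hL']
      exact h1
    have hsingle : (Pi.single j v : Fin n → EuclideanSpace ℝ (Fin d_s)) ∘ σ
        = Pi.single i v := by
      funext a
      have key : σ a = j ↔ a = i := by
        rw [show j = σ i from (Equiv.swap_apply_left i j).symm, Equiv.apply_eq_iff_eq]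
      simp only [Function.comp_apply, Pi.single_apply, key]
    calc L' (Pi.single j v, 0) = L'.comp P (Pi.single j v, 0) := by rw [← hLP]
      _ = L' ((Pi.single j v : Fin n → EuclideanSpace ℝ (Fin d_s)) ∘ σ, 0) := by
          rw [ContinuousLinearMap.comp_apply, hPapp]
      _ = L' (Pi.single i v, 0) := by rw [hsingle]
  -- main computation: fderiv L_S θ = n • (L'.comp (S i))
  have hsum : ∀ v : EuclideanSpace ℝ (Fin d_s),
      ((fun _ => v : Fin n → EuclideanSpace ℝ (Fin d_s)), (0 : EuclideanSpace ℝ (Fin m)))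
        = ∑ j : Fin n, ((Pi.single j v : Fin n → EuclideanSpace ℝ (Fin d_s)),
            (0 : EuclideanSpace ℝ (Fin m))) := by
    intro v
    refine Prod.ext ?_ ?_
    · rw [Prod.fst_sum]
      exact (Finset.univ_sum_single (fun _ => v)).symm
    · rw [Prod.snd_sum]
      simp
  have hmain : fderiv ℝ L_S θ = (n : ℝ) • (L'.comp (S i)) := by
    rw [hLSd.fderiv]
    ext v
    simp only [ContinuousLinearMap.comp_apply, ContinuousLinearMap.smul_apply]
    rw [hDapp v, hSapp i v, hsum v, map_sum,
      Finset.sum_congr rfl fun j _ => hsymderiv j v]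
    simp [Finset.sum_const, nsmul_eq_mul, smul_eq_mul]
  rw [gradient, (hgi i).fderiv, gradient, hmain, map_smul, smul_smul, one_div,
    inv_mul_cancel₀ hne, one_smul]
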